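/- Let λ0, λ2, M be positive reals with √(λ0/λ2) > M, and let β ∈ ℝ satisfy |β| ≤ M. Then the infimum of λ0·z + λ2·s over all pairs (s, z) with s ≥ 0, z ∈ [0,1], β² ≤ s·z, and |β| ≤ M·z equals (λ0/M + λ2·M)·|β|. -/

import Mathlib

theorem perspective_pointwise_gt
    (l0 l2 M β : ℝ) (hl0 : 0 < l0) (hl2 : 0 < l2) (hM : 0 < M)
    (hcase : M < Real.sqrt (l0 / l2)) (hβ : |β| ≤ M) :
    sInf {v : ℝ | ∃ s z : ℝ, 0 ≤ s ∧ 0 ≤ z ∧ z ≤ 1 ∧ β ^ 2 ≤ s * z ∧ |β| ≤ M * z ∧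
        v = l0 * z + l2 * s} =
      (l0 / M + l2 * M) * |β| := by
  have habs : 0 ≤ |β| := abs_nonneg β
  have hM2 : M ^ 2 * l2 < l0 := by
    have h1 : M ^ 2 < l0 / l2 := (Real.lt_sqrt hM.le).mp hcase
    have := (lt_div_iff₀ hl2).mp h1
    linarith
  have hmem : (l0 / M + l2 * M) * |β| ∈
      {v : ℝ | ∃ s z : ℝ, 0 ≤ s ∧ 0 ≤ z ∧ z ≤ 1 ∧ β ^ 2 ≤ s * z ∧ |β| ≤ M * z ∧
        v = l0 * z + l2 * s} := by
    refine ⟨M * |β|, |β| / M, by positivity, by positivity, ?_, ?_, ?_, ?_⟩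
    · rw [div_le_one hM]; exact hβ
    · have : M * |β| * (|β| / M) = β ^ 2 := by
        field_simp
        rw [sq_abs]
      rw [this]
    · rw [mul_div_cancel₀ _ hM.ne']
    · field_simp
  apply le_antisymm
  · apply csInf_le
    · refine ⟨0, ?_⟩
      rintro v ⟨s, z, hs, hz, _, _, _, rfl⟩
      positivity
    · exact hmem
  · apply le_csInf ⟨_, hmem⟩
    rintro v ⟨s, z, hs, hz, hz1, hsz, hβz, rfl⟩
    rcases eq_or_lt_of_le habs with heq | hpos
    · rw [← heq, mul_zero]
      positivity
    · have hzpos : 0 < z := by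
        by_contra h
        push_neg at h
        have : M * z ≤ 0 := mul_nonpos_of_nonneg_of_nonpos hM.le h
        linarith
      have hβ2 : β ^ 2 = |β| * |β| := by rw [← sq_abs]; ring
      have hlin : l2 * M * |β| ≤ l0 * z := by nlinarith
      have key2 : (l0 + l2 * M ^ 2) * |β| * z ≤ (l0 * z + l2 * s) * M * z := by
        nlinarith [mul_nonneg (sub_nonneg.mpr hβz) (sub_nonneg.mpr hlin),
          mul_nonneg (mul_nonneg hl2.le hM.le) (sub_nonneg.mpr hsz)]
      have key : (l0 + l2 * M ^ 2) * |β| ≤ (l0 * z + l2 * s) * M :=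
        le_of_mul_le_mul_right key2 hzpos
      rw [div_add' _ _ _ hM.ne', div_mul_eq_mul_div, div_le_iff₀ hM]
      nlinarith [key]
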